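/- arXiv:2510.03814 — 2 statements merged into one kernel-verified Lean document; each statement's English description precedes it below -/
import Mathlib

section
/- The piecewise-linear map T : ℝ² → ℝ² is a bijection of ℝ² if and only if D_L · D_R > 0, i.e., if and only if the determinants of the two branch matrices A_L and A_R are nonzero and have the same sign. -/
/-- The 2d continuous piecewise-linear map `T` with left branch matrix
`A_L = [[a_l, c],[b_l, d]]` (for `x ≤ 0`), right branch matrix
`A_R = [[a_r, c],[b_r, d]]` (for `x ≥ 0`), and bias `h = (h₁, h₂)`. -/
noncomputable def Tpl (al ar bl br c d h₁ h₂ : ℝ) : ℝ × ℝ → ℝ × ℝ := fun p =>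
  if p.1 ≤ 0 then (al * p.1 + c * p.2 + h₁, bl * p.1 + d * p.2 + h₂)
  else (ar * p.1 + c * p.2 + h₁, br * p.1 + d * p.2 + h₂)

/-- If the left matrix has a nonzero kernel vector, `T` is not injective. -/
lemma tpl_not_inj_left (al ar bl br c d h₁ h₂ k1 k2 : ℝ)
    (hk : ¬ (k1 = 0 ∧ k2 = 0))
    (e1 : al * k1 + c * k2 = 0) (e2 : bl * k1 + d * k2 = 0) :
    ¬ Function.Injective (Tpl al ar bl br c d h₁ h₂) := by
  intro hinj
  have hx1 : (-1 - |k1| : ℝ) ≤ 0 := by nlinarith [abs_nonneg k1]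
  have hx2 : (-1 - |k1| + k1 : ℝ) ≤ 0 := by nlinarith [le_abs_self k1]
  have heq : Tpl al ar bl br c d h₁ h₂ (-1 - |k1|, 0) =
      Tpl al ar bl br c d h₁ h₂ (-1 - |k1| + k1, k2) := by
    simp only [Tpl]
    rw [if_pos hx1, if_pos hx2, Prod.mk.injEq]
    constructor <;> nlinarith [e1, e2]
  have h := hinj heq
  rw [Prod.mk.injEq] at h
  exact hk ⟨by linarith [h.1], by linarith [h.2]⟩

/-- If the right matrix has a nonzero kernel vector, `T` is not injective. -/
lemma tpl_not_inj_right (al ar bl br c d h₁ h₂ k1 k2 : ℝ)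
    (hk : ¬ (k1 = 0 ∧ k2 = 0))
    (e1 : ar * k1 + c * k2 = 0) (e2 : br * k1 + d * k2 = 0) :
    ¬ Function.Injective (Tpl al ar bl br c d h₁ h₂) := by
  intro hinj
  have hx1 : ¬ ((1 + |k1| : ℝ) ≤ 0) := by nlinarith [abs_nonneg k1]
  have hx2 : ¬ ((1 + |k1| + k1 : ℝ) ≤ 0) := by nlinarith [neg_abs_le k1]
  have heq : Tpl al ar bl br c d h₁ h₂ (1 + |k1|, 0) =
      Tpl al ar bl br c d h₁ h₂ (1 + |k1| + k1, k2) := by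
    simp only [Tpl]
    rw [if_neg hx1, if_neg hx2, Prod.mk.injEq]
    constructor <;> nlinarith [e1, e2]
  have h := hinj heq
  rw [Prod.mk.injEq] at h
  exact hk ⟨by linarith [h.1], by linarith [h.2]⟩

set_option maxHeartbeats 1000000 in
/-- The piecewise-linear map `T` is a bijection of `ℝ²` iff
`D_L · D_R > 0` where `D_L = det A_L` and `D_R = det A_R`. -/
theorem stmt_3 (al ar bl br c d h₁ h₂ : ℝ) :
    Function.Bijective (Tpl al ar bl br c d h₁ h₂) ↔
      (al * d - bl * c) * (ar * d - br * c) > 0 := by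
  constructor
  · intro hbij
    by_contra hD
    push_neg at hD
    by_cases hl : al * d - bl * c = 0
    · -- left determinant zero : not injective
      by_cases h1 : c = 0 ∧ al = 0
      · by_cases h2 : d = 0 ∧ bl = 0
        · exact tpl_not_inj_left al ar bl br c d h₁ h₂ 0 1
            (by simp) (by simp [h1.1]) (by simp [h2.1]) hbij.injective
        · exact tpl_not_inj_left al ar bl br c d h₁ h₂ d (-bl)
            (by intro h; exact h2 ⟨h.1, by linarith [h.2]⟩)
            (by nlinarith [hl]) (by ring) hbij.injective
      · exact tpl_not_inj_left al ar bl br c d h₁ h₂ c (-al)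
          (by intro h; exact h1 ⟨h.1, by linarith [h.2]⟩)
          (by ring) (by nlinarith [hl]) hbij.injective
    · by_cases hr : ar * d - br * c = 0
      · by_cases h1 : c = 0 ∧ ar = 0
        · by_cases h2 : d = 0 ∧ br = 0
          · exact tpl_not_inj_right al ar bl br c d h₁ h₂ 0 1
              (by simp) (by simp [h1.1]) (by simp [h2.1]) hbij.injective
          · exact tpl_not_inj_right al ar bl br c d h₁ h₂ d (-br)
              (by intro h; exact h2 ⟨h.1, by linarith [h.2]⟩)
              (by nlinarith [hr]) (by ring) hbij.injective
        · exact tpl_not_inj_right al ar bl br c d h₁ h₂ c (-ar)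
            (by intro h; exact h1 ⟨h.1, by linarith [h.2]⟩)
            (by ring) (by nlinarith [hr]) hbij.injective
      · -- determinants nonzero with opposite signs : not surjective
        have hlt : (al * d - bl * c) * (ar * d - br * c) < 0 :=
          lt_of_le_of_ne hD (mul_ne_zero hl hr)
        rcases lt_or_gt_of_ne hl with hLneg | hLpos
        · -- DL < 0, DR > 0 ; the point (-d + h₁, c + h₂) has no preimage
          have hRpos : 0 < ar * d - br * c := by nlinarith
          obtain ⟨⟨p1, p2⟩, hp⟩ := hbij.surjective (-d + h₁, c + h₂)
          simp only [Tpl] at hp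
          by_cases hp1 : p1 ≤ 0
          · rw [if_pos hp1, Prod.mk.injEq] at hp
            have e1 : al * p1 + c * p2 = -d := by linarith [hp.1]
            have e2 : bl * p1 + d * p2 = c := by linarith [hp.2]
            have key : -(d * d + c * c) = (al * d - bl * c) * p1 := by
              linear_combination c * e2 - d * e1
            have hnn : 0 ≤ (al * d - bl * c) * p1 := by nlinarith
            have hcd : d * d + c * c ≤ 0 := by linarith
            have hc : c = 0 := by nlinarith [sq_nonneg c, sq_nonneg d]
            have hd : d = 0 := by nlinarith [sq_nonneg c, sq_nonneg d]
            rw [hc, hd] at hLneg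
            simp at hLneg
          · rw [if_neg hp1, Prod.mk.injEq] at hp
            push_neg at hp1
            have e1 : ar * p1 + c * p2 = -d := by linarith [hp.1]
            have e2 : br * p1 + d * p2 = c := by linarith [hp.2]
            have key : -(d * d + c * c) = (ar * d - br * c) * p1 := by
              linear_combination c * e2 - d * e1
            nlinarith [mul_pos hRpos hp1, sq_nonneg c, sq_nonneg d]
        · -- DL > 0, DR < 0 ; the point (d + h₁, -c + h₂) has no preimage
          have hRneg : ar * d - br * c < 0 := by nlinarith
          obtain ⟨⟨p1, p2⟩, hp⟩ := hbij.surjective (d + h₁, -c + h₂)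
          simp only [Tpl] at hp
          by_cases hp1 : p1 ≤ 0
          · rw [if_pos hp1, Prod.mk.injEq] at hp
            have e1 : al * p1 + c * p2 = d := by linarith [hp.1]
            have e2 : bl * p1 + d * p2 = -c := by linarith [hp.2]
            have key : d * d + c * c = (al * d - bl * c) * p1 := by
              linear_combination c * e2 - d * e1
            have hnp : (al * d - bl * c) * p1 ≤ 0 :=
              mul_nonpos_of_nonneg_of_nonpos hLpos.le hp1
            have hcd : d * d + c * c ≤ 0 := by linarith
            have hc : c = 0 := by nlinarith [sq_nonneg c, sq_nonneg d]
            have hd : d = 0 := by nlinarith [sq_nonneg c, sq_nonneg d]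
            rw [hc, hd] at hLpos
            simp at hLpos
          · rw [if_neg hp1, Prod.mk.injEq] at hp
            push_neg at hp1
            have e1 : ar * p1 + c * p2 = d := by linarith [hp.1]
            have e2 : br * p1 + d * p2 = -c := by linarith [hp.2]
            have key : d * d + c * c = (ar * d - br * c) * p1 := by
              linear_combination c * e2 - d * e1
            nlinarith [mul_neg_of_neg_of_pos hRneg hp1, sq_nonneg c, sq_nonneg d]
  · -- backward: construct an explicit inverse
    intro hD
    have hDL : al * d - bl * c ≠ 0 := by
      intro h; rw [h] at hD; simp at hD
    have hDR : ar * d - br * c ≠ 0 := by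
      intro h; rw [h] at hD; simp at hD
    have hDL2 : 0 < (al * d - bl * c) ^ 2 :=
      lt_of_le_of_ne (sq_nonneg _) (Ne.symm (pow_ne_zero 2 hDL))
    have hDR2 : 0 < (ar * d - br * c) ^ 2 :=
      lt_of_le_of_ne (sq_nonneg _) (Ne.symm (pow_ne_zero 2 hDR))
    rw [Function.bijective_iff_has_inverse]
    refine ⟨fun q =>
      if (d * (q.1 - h₁) - c * (q.2 - h₂)) * (al * d - bl * c) ≤ 0 then
        ((d * (q.1 - h₁) - c * (q.2 - h₂)) / (al * d - bl * c),
         (-bl * (q.1 - h₁) + al * (q.2 - h₂)) / (al * d - bl * c))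
      else
        ((d * (q.1 - h₁) - c * (q.2 - h₂)) / (ar * d - br * c),
         (-br * (q.1 - h₁) + ar * (q.2 - h₂)) / (ar * d - br * c)), ?_, ?_⟩
    · -- left inverse
      rintro ⟨p1, p2⟩
      by_cases hp1 : p1 ≤ 0
      · simp only [Tpl, if_pos hp1]
        have hw : (d * (al * p1 + c * p2 + h₁ - h₁) - c * (bl * p1 + d * p2 + h₂ - h₂))
            * (al * d - bl * c) ≤ 0 := by nlinarith [sq_nonneg (al * d - bl * c)]
        rw [if_pos hw, Prod.mk.injEq]
        constructor <;> (rw [div_eq_iff hDL]; ring)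
      · simp only [Tpl, if_neg hp1]
        push_neg at hp1
        have hw : ¬ ((d * (ar * p1 + c * p2 + h₁ - h₁) - c * (br * p1 + d * p2 + h₂ - h₂))
            * (al * d - bl * c) ≤ 0) := by
          push_neg
          have : (d * (ar * p1 + c * p2 + h₁ - h₁) - c * (br * p1 + d * p2 + h₂ - h₂))
              * (al * d - bl * c) = p1 * ((al * d - bl * c) * (ar * d - br * c)) := by ring
          rw [this]
          exact mul_pos hp1 hD
        rw [if_neg hw, Prod.mk.injEq]
        constructor <;> (rw [div_eq_iff hDR]; ring)
    · -- right inverse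
      rintro ⟨q1, q2⟩
      by_cases hw : (d * (q1 - h₁) - c * (q2 - h₂)) * (al * d - bl * c) ≤ 0
      · simp only [if_pos hw, Tpl]
        have hx : (d * (q1 - h₁) - c * (q2 - h₂)) / (al * d - bl * c) ≤ 0 := by
          rw [div_nonpos_iff]
          rcases lt_or_gt_of_ne hDL with h | h
          · left
            exact ⟨by nlinarith, h.le⟩
          · right
            exact ⟨by nlinarith, h.le⟩
        rw [if_pos hx, Prod.mk.injEq]
        exact ⟨by linear_combination (q1 - h₁) * mul_inv_cancel₀ hDL, by linear_combination (q2 - h₂) * mul_inv_cancel₀ hDL⟩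
      · simp only [if_neg hw, Tpl]
        push_neg at hw
        have hwR : 0 < (d * (q1 - h₁) - c * (q2 - h₂)) * (ar * d - br * c) := by
          nlinarith [mul_pos hw hD, hDL2]
        have hx : ¬ ((d * (q1 - h₁) - c * (q2 - h₂)) / (ar * d - br * c) ≤ 0) := by
          push_neg
          rw [div_pos_iff]
          rcases lt_or_gt_of_ne hDR with h | h
          · right
            exact ⟨by nlinarith, h⟩
          · left
            exact ⟨by nlinarith, h⟩
        rw [if_neg hx, Prod.mk.injEq]
        exact ⟨by linear_combination (q1 - h₁) * mul_inv_cancel₀ hDR, by linear_combination (q2 - h₂) * mul_inv_cancel₀ hDR⟩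
end

section
/- Set Δ = (a_r·d − b_r·c)·(a_l·d − b_l·c) − c·(b_l + b_r) − d² − a_l·a_r + 1 and assume Δ ≠ 0 (equivalently, det(I − A_L·A_R) ≠ 0). Then there exists a unique pair of points (p, q) in ℝ² with q = A_R·p + h and p = A_L·q + h (a 2-cycle of the pair of affine branches), and their first coordinates are p₁ = ((1 − d)·h₁ + c·h₂)·(a_l + d + a_l·d − b_l·c + 1)/Δ and q₁ = ((1 − d)·h₁ + c·h₂)·(a_r + d + a_r·d − b_r·c + 1)/Δ. -/
private lemma stmt_15_key (al ar bl br c d h₁ h₂ : ℝ)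
    (hΔ : (ar * d - br * c) * (al * d - bl * c) - c * (bl + br) - d ^ 2 - al * ar + 1 ≠ 0)
    (x y u v : ℝ)
    (hu : u = ar * x + c * y + h₁) (hv : v = br * x + d * y + h₂)
    (hx : x = al * u + c * v + h₁) (hy : y = bl * u + d * v + h₂) :
    x = ((1 - d) * h₁ + c * h₂) * (al + d + al * d - bl * c + 1)
        / ((ar * d - br * c) * (al * d - bl * c) - c * (bl + br) - d ^ 2 - al * ar + 1) ∧
    y = ((bl * ar + d * br) * ((al + 1) * h₁ + c * h₂)
        + (1 - al * ar - c * br) * (bl * h₁ + (d + 1) * h₂))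
        / ((ar * d - br * c) * (al * d - bl * c) - c * (bl + br) - d ^ 2 - al * ar + 1) := by
  have e1 := hx; rw [hu, hv] at e1
  have e2 := hy; rw [hu, hv] at e2
  constructor
  · rw [eq_div_iff hΔ]
    linear_combination (1 - bl * c - d ^ 2) * e1 + (al * c + c * d) * e2
  · rw [eq_div_iff hΔ]
    linear_combination (bl * ar + d * br) * e1 + (1 - al * ar - c * br) * e2

/-- If `Δ = (a_r d - b_r c)(a_l d - b_l c) - c(b_l + b_r) - d² - a_l a_r + 1 ≠ 0`
then there is a unique pair `(p, q)` with `q = A_R·p + h` and `p = A_L·q + h`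
(a 2-cycle of the two affine branches), whose first coordinates are given by the
closed-form expressions. -/
theorem stmt_15 (al ar bl br c d h₁ h₂ : ℝ)
    (hΔ : (ar * d - br * c) * (al * d - bl * c) - c * (bl + br) - d ^ 2 - al * ar + 1 ≠ 0) :
    (∃! pq : (ℝ × ℝ) × (ℝ × ℝ),
        pq.2 = (ar * pq.1.1 + c * pq.1.2 + h₁, br * pq.1.1 + d * pq.1.2 + h₂) ∧
        pq.1 = (al * pq.2.1 + c * pq.2.2 + h₁, bl * pq.2.1 + d * pq.2.2 + h₂)) ∧
    (∀ pq : (ℝ × ℝ) × (ℝ × ℝ),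
      (pq.2 = (ar * pq.1.1 + c * pq.1.2 + h₁, br * pq.1.1 + d * pq.1.2 + h₂) ∧
       pq.1 = (al * pq.2.1 + c * pq.2.2 + h₁, bl * pq.2.1 + d * pq.2.2 + h₂)) →
      pq.1.1 = ((1 - d) * h₁ + c * h₂) * (al + d + al * d - bl * c + 1)
          / ((ar * d - br * c) * (al * d - bl * c) - c * (bl + br) - d ^ 2 - al * ar + 1) ∧
      pq.2.1 = ((1 - d) * h₁ + c * h₂) * (ar + d + ar * d - br * c + 1)
          / ((ar * d - br * c) * (al * d - bl * c) - c * (bl + br) - d ^ 2 - al * ar + 1)) := by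
  set px : ℝ := ((1 - d) * h₁ + c * h₂) * (al + d + al * d - bl * c + 1)
      / ((ar * d - br * c) * (al * d - bl * c) - c * (bl + br) - d ^ 2 - al * ar + 1) with hpx
  set py : ℝ := ((bl * ar + d * br) * ((al + 1) * h₁ + c * h₂)
      + (1 - al * ar - c * br) * (bl * h₁ + (d + 1) * h₂))
      / ((ar * d - br * c) * (al * d - bl * c) - c * (bl + br) - d ^ 2 - al * ar + 1) with hpy
  have hq1 : px = al * (ar * px + c * py + h₁) + c * (br * px + d * py + h₂) + h₁ := by
    rw [hpx, hpy]; generalize hD : (ar * d - br * c) * (al * d - bl * c) - c * (bl + br) - d ^ 2 - al * ar + 1 = D at hΔ ⊢; field_simp; rw [← hD]; ring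
  have hq2 : py = bl * (ar * px + c * py + h₁) + d * (br * px + d * py + h₂) + h₂ := by
    rw [hpx, hpy]; generalize hD : (ar * d - br * c) * (al * d - bl * c) - c * (bl + br) - d ^ 2 - al * ar + 1 = D at hΔ ⊢; field_simp; rw [← hD]; ring
  constructor
  · refine ⟨((px, py), (ar * px + c * py + h₁, br * px + d * py + h₂)), ⟨rfl, ?_⟩, ?_⟩
    · exact Prod.ext hq1 hq2
    · rintro ⟨⟨x, y⟩, ⟨u, v⟩⟩ ⟨h1, h2⟩
      simp only [Prod.mk.injEq] at h1 h2
      obtain ⟨hxy1, hxy2⟩ := stmt_15_key al ar bl br c d h₁ h₂ hΔ x y u v h1.1 h1.2 h2.1 h2.2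
      rw [← hpx] at hxy1; rw [← hpy] at hxy2
      simp only [Prod.mk.injEq]
      exact ⟨⟨hxy1, hxy2⟩, by rw [h1.1, hxy1, hxy2], by rw [h1.2, hxy1, hxy2]⟩
  · rintro ⟨⟨x, y⟩, ⟨u, v⟩⟩ ⟨h1, h2⟩
    simp only [Prod.mk.injEq] at h1 h2
    obtain ⟨hxy1, hxy2⟩ := stmt_15_key al ar bl br c d h₁ h₂ hΔ x y u v h1.1 h1.2 h2.1 h2.2
    refine ⟨hxy1, ?_⟩
    have hu : u = ar * x + c * y + h₁ := h1.1
    rw [hu, hxy1, hxy2]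
    generalize hD : (ar * d - br * c) * (al * d - bl * c) - c * (bl + br) - d ^ 2 - al * ar + 1 = D at hΔ ⊢
    field_simp
    rw [← hD]
    ring
end
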